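/- Let (N, O, d, (m_j)_{j∈O}, (c_j)_{j∈O}) be a market. Then the set ΔD of implementable random allocations (the convex hull of the set D of allowable deterministic allocations) equals the set R = {μ ∈ [0,1]^{N×O} : ∑_{j∈O} μ_{ij} = d for every agent i ∈ N, and m_j ≤ ∑_{i∈N} μ_{ij} ≤ c_j for every object j ∈ O}. -/

import Mathlib

open Finset

namespace CHA

/-! ### Integrality helpers -/

def IsIntR (x : ℝ) : Prop := ∃ z : ℤ, x = z

lemma IsIntR.sub {x y : ℝ} (hx : IsIntR x) (hy : IsIntR y) : IsIntR (x - y) := by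
  obtain ⟨a, rfl⟩ := hx; obtain ⟨b, rfl⟩ := hy; exact ⟨a - b, by push_cast; ring⟩

lemma IsIntR.add {x y : ℝ} (hx : IsIntR x) (hy : IsIntR y) : IsIntR (x + y) := by
  obtain ⟨a, rfl⟩ := hx; obtain ⟨b, rfl⟩ := hy; exact ⟨a + b, by push_cast; ring⟩

lemma isIntR_zero : IsIntR 0 := ⟨0, by norm_num⟩
lemma isIntR_natCast (n : ℕ) : IsIntR (n : ℝ) := ⟨n, by push_cast; ring⟩

lemma isIntR_sum {α : Type*} (s : Finset α) (f : α → ℝ) (h : ∀ a ∈ s, IsIntR (f a)) :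
    IsIntR (∑ a ∈ s, f a) :=
  Finset.sum_induction f IsIntR (fun _ _ => IsIntR.add) isIntR_zero h

lemma IsIntR.eq_zero_or_one {x : ℝ} (h : IsIntR x) (h0 : 0 ≤ x) (h1 : x ≤ 1) :
    x = 0 ∨ x = 1 := by
  obtain ⟨z, rfl⟩ := h
  have h0' : (0:ℤ) ≤ z := by exact_mod_cast h0
  have h1' : z ≤ 1 := by exact_mod_cast h1
  interval_cases z <;> simp

lemma not_isIntR_of_frac {x : ℝ} (h0 : 0 ≤ x) (h1 : x ≤ 1) (hne : x ≠ 0) (hne1 : x ≠ 1) :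
    ¬ IsIntR x := fun h => by rcases h.eq_zero_or_one h0 h1 with h | h <;> simp_all

lemma isIntR_of_sum {ι : Type*} [Fintype ι] (a : ι → ℝ) (hs : IsIntR (∑ i, a i))
    (i₀ : ι) (h : ∀ i, i ≠ i₀ → IsIntR (a i)) : IsIntR (a i₀) := by
  classical
  have he : a i₀ = (∑ i, a i) - ∑ i ∈ univ.erase i₀, a i := by
    rw [eq_sub_iff_add_eq, add_comm, Finset.sum_erase_add]
    exact mem_univ i₀
  rw [he]
  exact hs.sub (isIntR_sum _ _ fun i hi => h i (Finset.ne_of_mem_erase hi))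

/-! ### Counting helpers -/

lemma two_mul_image_card_le {α β : Type*} [DecidableEq α] [DecidableEq β]
    (S : Finset α) (f : α → β)
    (h : ∀ b ∈ S.image f, 2 ≤ (S.filter (fun a => f a = b)).card) :
    2 * (S.image f).card ≤ S.card := by
  have := Finset.card_eq_sum_card_fiberwise (s := S) (t := S.image f) (f := f)
    (fun x hx => Finset.mem_image_of_mem f hx)
  rw [this]
  calc 2 * (S.image f).card = ∑ _b ∈ S.image f, 2 := by
        rw [Finset.sum_const, smul_eq_mul, mul_comm]
    _ ≤ _ := Finset.sum_le_sum h

lemma two_le_card_of_two_mem {α : Type*} {s : Finset α} {a b : α}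
    (ha : a ∈ s) (hb : b ∈ s) (hab : a ≠ b) : 2 ≤ s.card :=
  Finset.one_lt_card.mpr ⟨a, ha, b, hb, hab⟩

section Main

variable {N O : Type*} [Fintype N] [Fintype O]

/-! ### The fractional support and the badness measure -/

open Classical in
noncomputable def fracSet (μ : N → O → ℝ) : Finset (N × O) :=
  univ.filter fun p => μ p.1 p.2 ≠ 0 ∧ μ p.1 p.2 ≠ 1

lemma mem_fracSet {μ : N → O → ℝ} {p : N × O} :
    p ∈ fracSet μ ↔ μ p.1 p.2 ≠ 0 ∧ μ p.1 p.2 ≠ 1 := by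
  classical simp [fracSet]

open Classical in
noncomputable def Bad (μ : N → O → ℝ) : Finset ((N × O) ⊕ O) :=
  univ.filter (Sum.elim (fun p => μ p.1 p.2 ≠ 0 ∧ μ p.1 p.2 ≠ 1)
    (fun j => ¬ IsIntR (∑ i, μ i j)))

lemma inl_mem_Bad {μ : N → O → ℝ} {p : N × O} :
    Sum.inl p ∈ Bad μ ↔ μ p.1 p.2 ≠ 0 ∧ μ p.1 p.2 ≠ 1 := by
  classical simp [Bad]

lemma inr_mem_Bad {μ : N → O → ℝ} {j : O} :
    Sum.inr j ∈ Bad μ ↔ ¬ IsIntR (∑ i, μ i j) := by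
  classical simp [Bad]

variable {μ : N → O → ℝ} (hb : ∀ i j, 0 ≤ μ i j ∧ μ i j ≤ 1)

include hb in
lemma isIntR_entry {i : N} {j : O} (h : (i, j) ∉ fracSet μ) : IsIntR (μ i j) := by
  rw [mem_fracSet] at h
  push_neg at h
  by_cases h0 : μ i j = 0
  · exact ⟨0, by simp [h0]⟩
  · exact ⟨1, by simp [h h0]⟩

include hb in
lemma not_isIntR_entry {i : N} {j : O} (h : (i, j) ∈ fracSet μ) : ¬ IsIntR (μ i j) := by
  rw [mem_fracSet] at h
  exact not_isIntR_of_frac (hb i j).1 (hb i j).2 h.1 h.2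

include hb in
lemma second_in_row {d : ℕ} (hrow : ∀ i, ∑ j, μ i j = d) {p : N × O} (hp : p ∈ fracSet μ) :
    ∃ q ∈ fracSet μ, q.1 = p.1 ∧ q ≠ p := by
  by_contra hcon
  push_neg at hcon
  have : IsIntR (μ p.1 p.2) := by
    refine isIntR_of_sum (fun j => μ p.1 j) ?_ p.2 fun j hj => ?_
    · rw [hrow]; exact isIntR_natCast d
    · refine isIntR_entry hb fun hmem => ?_
      exact hj (by simpa using congrArg Prod.snd (hcon _ hmem rfl))
  exact not_isIntR_entry hb hp this

include hb in
lemma second_in_col {p : N × O} (hcol : IsIntR (∑ i, μ i p.2)) (hp : p ∈ fracSet μ) :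
    ∃ q ∈ fracSet μ, q.2 = p.2 ∧ q ≠ p := by
  by_contra hcon
  push_neg at hcon
  have : IsIntR (μ p.1 p.2) := by
    refine isIntR_of_sum (fun i => μ i p.2) hcol p.1 fun i hi => ?_
    refine isIntR_entry hb fun hmem => ?_
    exact hi (by simpa using congrArg Prod.fst (hcon _ hmem rfl))
  exact not_isIntR_entry hb hp this

/-! ### Rank–nullity : existence of a nonzero kernel direction -/

variable [DecidableEq N] [DecidableEq O]

noncomputable def emb (S : Finset (N × O)) : (↥S → ℝ) →ₗ[ℝ] (N → O → ℝ) where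
  toFun x := fun i j => if h : (i, j) ∈ S then x ⟨(i, j), h⟩ else 0
  map_add' x y := by funext i j; by_cases h : (i, j) ∈ S <;> simp [h]
  map_smul' r x := by funext i j; by_cases h : (i, j) ∈ S <;> simp [h]

noncomputable def rowSumMap (A : Finset N) : (N → O → ℝ) →ₗ[ℝ] (↥A → ℝ) where
  toFun μ := fun i => ∑ j, μ (i : N) j
  map_add' x y := by funext i; simp [Finset.sum_add_distrib]
  map_smul' r x := by funext i; simp [Finset.mul_sum]

noncomputable def colSumMap (A : Finset O) : (N → O → ℝ) →ₗ[ℝ] (↥A → ℝ) where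
  toFun μ := fun j => ∑ i, μ i (j : O)
  map_add' x y := by funext j; simp [Finset.sum_add_distrib]
  map_smul' r x := by funext j; simp [Finset.mul_sum]

lemma exists_ne_zero_kernel {S : Finset (N × O)} {RW : Finset N} {TC : Finset O}
    (hcard : RW.card + TC.card < S.card) :
    ∃ δ : N → O → ℝ, δ ≠ 0 ∧ (∀ p : N × O, p ∉ S → δ p.1 p.2 = 0) ∧
      (∀ i ∈ RW, ∑ j, δ i j = 0) ∧ (∀ j ∈ TC, ∑ i, δ i j = 0) := by
  set F := LinearMap.prod ((rowSumMap RW).comp (emb S)) ((colSumMap TC).comp (emb S)) with hF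
  have hni : ¬ Function.Injective F := by
    intro hinj
    have := LinearMap.finrank_le_finrank_of_injective hinj
    rw [Module.finrank_fintype_fun_eq_card, Module.finrank_prod,
      Module.finrank_fintype_fun_eq_card, Module.finrank_fintype_fun_eq_card,
      Fintype.card_coe, Fintype.card_coe, Fintype.card_coe] at this
    omega
  rw [Function.not_injective_iff] at hni
  obtain ⟨x, y, hxy, hne⟩ := hni
  refine ⟨emb S (x - y), ?_, ?_, ?_, ?_⟩
  · intro h
    apply hne
    have : ∀ p : ↥S, (x - y) p = 0 := by
      intro p
      have := congrFun (congrFun h (p : N × O).1) (p : N × O).2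
      simpa [emb] using this
    exact sub_eq_zero.mp (funext this)
  · intro p hp
    simp [emb, hp]
  · intro i hi
    have := congrFun (congrArg Prod.fst (by rw [map_sub, hxy, sub_self] : F (x - y) = 0)) ⟨i, hi⟩
    simpa [hF, rowSumMap] using this
  · intro j hj
    have := congrFun (congrArg Prod.snd (by rw [map_sub, hxy, sub_self] : F (x - y) = 0)) ⟨j, hj⟩
    simpa [hF, colSumMap] using this

include hb in
lemma exists_direction {d : ℕ} (hrow : ∀ i, ∑ j, μ i j = d) (hfrac : (fracSet μ).Nonempty) :
    ∃ δ : N → O → ℝ, δ ≠ 0 ∧ (∀ p : N × O, p ∉ fracSet μ → δ p.1 p.2 = 0) ∧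
      (∀ i, ∑ j, δ i j = 0) ∧ (∀ j, IsIntR (∑ i, μ i j) → ∑ i, δ i j = 0) := by
  classical
  set S := fracSet μ with hS
  set RW := S.image Prod.fst with hRW
  set CO := S.image Prod.snd with hCO
  set TC := CO.filter (fun j => IsIntR (∑ i, μ i j)) with hTC
  have hrowfib : ∀ i ∈ RW, 2 ≤ (S.filter (fun p => p.1 = i)).card := by
    intro i hi
    obtain ⟨p, hp, hpi⟩ := Finset.mem_image.mp hi
    obtain ⟨q, hq, hq1, hqp⟩ := second_in_row hb hrow hp
    exact two_le_card_of_two_mem (a := q) (b := p)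
      (Finset.mem_filter.mpr ⟨hq, hq1.trans hpi⟩) (Finset.mem_filter.mpr ⟨hp, hpi⟩) hqp
  have hRWcard : 2 * RW.card ≤ S.card := two_mul_image_card_le S Prod.fst hrowfib
  have hRWne : RW.Nonempty := hfrac.image _
  have hcolfib : ∀ j ∈ TC, 2 ≤ (S.filter (fun p => p.2 = j)).card := by
    intro j hj
    obtain ⟨hj', hint⟩ := Finset.mem_filter.mp hj
    obtain ⟨p, hp, hpj⟩ := Finset.mem_image.mp hj'
    obtain ⟨q, hq, hq2, hqp⟩ := second_in_col hb (by rw [hpj]; exact hint) hp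
    exact two_le_card_of_two_mem (a := q) (b := p)
      (Finset.mem_filter.mpr ⟨hq, hq2.trans hpj⟩) (Finset.mem_filter.mpr ⟨hp, hpj⟩) hqp
  have hrow0 : ∀ (δ : N → O → ℝ), (∀ p : N × O, p ∉ S → δ p.1 p.2 = 0) →
      ∀ i ∉ RW, ∑ j, δ i j = 0 := by
    intro δ hsupp i hi
    refine Finset.sum_eq_zero fun j _ => hsupp (i, j) fun hmem => hi ?_
    exact Finset.mem_image.mpr ⟨(i, j), hmem, rfl⟩
  have hcol0 : ∀ (δ : N → O → ℝ), (∀ p : N × O, p ∉ S → δ p.1 p.2 = 0) →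
      ∀ j ∉ CO, ∑ i, δ i j = 0 := by
    intro δ hsupp j hj
    refine Finset.sum_eq_zero fun i _ => hsupp (i, j) fun hmem => hj ?_
    exact Finset.mem_image.mpr ⟨(i, j), hmem, rfl⟩
  by_cases hcase : ∀ j ∈ CO, IsIntR (∑ i, μ i j)
  · -- Case B : all touched columns have integral sums
    have hTCeq : TC = CO := Finset.filter_true_of_mem hcase
    have hCOcard : 2 * CO.card ≤ S.card := by
      refine two_mul_image_card_le S Prod.snd fun j hj => hcolfib j ?_
      rw [hTCeq]; exact hj
    obtain ⟨i₀, hi₀⟩ := hRWne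
    have hcard : (RW.erase i₀).card + CO.card < S.card := by
      have h1 : 1 ≤ RW.card := Finset.card_pos.mpr ⟨i₀, hi₀⟩
      have h2 := Finset.card_erase_of_mem hi₀
      omega
    obtain ⟨δ, hδ0, hsupp, hrows, hcols⟩ :=
      exists_ne_zero_kernel (S := S) (RW := RW.erase i₀) (TC := CO) hcard
    have hallcols : ∀ j, ∑ i, δ i j = 0 := by
      intro j
      by_cases hj : j ∈ CO
      · exact hcols j hj
      · exact hcol0 δ hsupp j hj
    have hallrows : ∀ i, ∑ j, δ i j = 0 := by
      have hi₀sum : ∑ j, δ i₀ j = 0 := by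
        have htot : ∑ i, ∑ j, δ i j = 0 := by
          rw [Finset.sum_comm]
          exact Finset.sum_eq_zero fun j _ => hallcols j
        have hothers : ∀ i ∈ univ.erase i₀, ∑ j, δ i j = 0 := by
          intro i hi
          by_cases hiRW : i ∈ RW
          · exact hrows i (Finset.mem_erase.mpr ⟨(Finset.mem_erase.mp hi).1, hiRW⟩)
          · exact hrow0 δ hsupp i hiRW
        have := Finset.sum_erase_add univ (fun i => ∑ j, δ i j) (Finset.mem_univ i₀)
        rw [Finset.sum_eq_zero hothers, zero_add] at this
        rw [this]; exact htot
      intro i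
      by_cases hii : i = i₀
      · rw [hii]; exact hi₀sum
      · by_cases hiRW : i ∈ RW
        · exact hrows i (Finset.mem_erase.mpr ⟨hii, hiRW⟩)
        · exact hrow0 δ hsupp i hiRW
    exact ⟨δ, hδ0, hsupp, hallrows, fun j _ => hallcols j⟩
  · -- Case A : some touched column has a non-integral sum
    push_neg at hcase
    obtain ⟨j₀, hj₀CO, hj₀⟩ := hcase
    have hj₀TC : j₀ ∉ TC := fun h => hj₀ (Finset.mem_filter.mp h).2
    have hTCbound : 2 * TC.card + 1 ≤ S.card := by
      have hfib := Finset.card_eq_sum_card_fiberwise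
        (s := S) (t := CO) (f := Prod.snd) (fun x hx => Finset.mem_image_of_mem _ hx)
      have hins : insert j₀ TC ⊆ CO :=
        Finset.insert_subset hj₀CO (Finset.filter_subset _ _)
      have hsum1 : ∑ j ∈ insert j₀ TC, (S.filter (fun p => p.2 = j)).card ≤
          ∑ j ∈ CO, (S.filter (fun p => p.2 = j)).card :=
        Finset.sum_le_sum_of_subset hins
      have hsum2 : 2 * TC.card + 1 ≤
          ∑ j ∈ insert j₀ TC, (S.filter (fun p => p.2 = j)).card := by
        rw [Finset.sum_insert hj₀TC]
        have hfib0 : 1 ≤ (S.filter (fun p => p.2 = j₀)).card := by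
          obtain ⟨p, hp, hpj⟩ := Finset.mem_image.mp hj₀CO
          exact Finset.card_pos.mpr ⟨p, Finset.mem_filter.mpr ⟨hp, hpj⟩⟩
        have : 2 * TC.card ≤ ∑ j ∈ TC, (S.filter (fun p => p.2 = j)).card := by
          calc 2 * TC.card = ∑ _j ∈ TC, 2 := by rw [Finset.sum_const, smul_eq_mul, mul_comm]
            _ ≤ _ := Finset.sum_le_sum hcolfib
        omega
      omega
    have hcard : RW.card + TC.card < S.card := by omega
    obtain ⟨δ, hδ0, hsupp, hrows, hcols⟩ :=
      exists_ne_zero_kernel (S := S) (RW := RW) (TC := TC) hcard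
    refine ⟨δ, hδ0, hsupp, ?_, ?_⟩
    · intro i
      by_cases hiRW : i ∈ RW
      · exact hrows i hiRW
      · exact hrow0 δ hsupp i hiRW
    · intro j hj
      by_cases hjCO : j ∈ CO
      · exact hcols j (Finset.mem_filter.mpr ⟨hjCO, hj⟩)
      · exact hcol0 δ hsupp j hjCO

include hb in
lemma perturb {δ : N → O → ℝ} {d : ℕ} {m c : O → ℕ}
    (hrow : ∀ i, ∑ j, μ i j = d)
    (hcolb : ∀ j, (m j : ℝ) ≤ ∑ i, μ i j ∧ ∑ i, μ i j ≤ c j)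
    (hδ0 : δ ≠ 0) (hsupp : ∀ p : N × O, p ∉ fracSet μ → δ p.1 p.2 = 0)
    (hrowδ : ∀ i, ∑ j, δ i j = 0)
    (hcolδ : ∀ j, IsIntR (∑ i, μ i j) → ∑ i, δ i j = 0) :
    ∃ ε : ℝ, 0 < ε ∧
      (∀ i j, 0 ≤ μ i j + ε * δ i j ∧ μ i j + ε * δ i j ≤ 1) ∧
      (∀ i, ∑ j, (μ i j + ε * δ i j) = d) ∧
      (∀ j, (m j : ℝ) ≤ ∑ i, (μ i j + ε * δ i j) ∧ ∑ i, (μ i j + ε * δ i j) ≤ c j) ∧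
      Bad (fun i j => μ i j + ε * δ i j) ⊂ Bad μ := by
  classical
  set cδ : O → ℝ := fun j => ∑ i, δ i j with hcδ
  set s : O → ℝ := fun j => ∑ i, μ i j with hs
  have hfracp : ∀ p : N × O, δ p.1 p.2 ≠ 0 → μ p.1 p.2 ≠ 0 ∧ μ p.1 p.2 ≠ 1 := by
    intro p hp
    by_contra hcon
    exact hp (hsupp p fun hmem => hcon (mem_fracSet.mp hmem))
  have hopen : ∀ p : N × O, δ p.1 p.2 ≠ 0 → 0 < μ p.1 p.2 ∧ μ p.1 p.2 < 1 := by
    intro p hp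
    obtain ⟨h0, h1⟩ := hfracp p hp
    exact ⟨lt_of_le_of_ne (hb p.1 p.2).1 (Ne.symm h0), lt_of_le_of_ne (hb p.1 p.2).2 h1⟩
  have hfracj : ∀ j, cδ j ≠ 0 → ¬ IsIntR (s j) := by
    intro j hj hint
    exact hj (hcolδ j hint)
  have hopenj : ∀ j, cδ j ≠ 0 → (m j : ℝ) < s j ∧ s j < (c j : ℝ) := by
    intro j hj
    constructor
    · refine lt_of_le_of_ne (hcolb j).1 fun h => hfracj j hj ?_
      rw [← h]; exact isIntR_natCast _
    · refine lt_of_le_of_ne (hcolb j).2 fun h => hfracj j hj ?_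
      rw [h]; exact isIntR_natCast _
  set A : Finset ((N × O) ⊕ O) :=
    univ.filter (Sum.elim (fun p => δ p.1 p.2 ≠ 0) (fun j => cδ j ≠ 0)) with hA
  have memA_inl : ∀ p : N × O, Sum.inl p ∈ A ↔ δ p.1 p.2 ≠ 0 := by
    intro p; simp [hA]
  have memA_inr : ∀ j, Sum.inr j ∈ A ↔ cδ j ≠ 0 := by
    intro j; simp [hA]
  set th : ((N × O) ⊕ O) → ℝ := Sum.elim
    (fun p => if 0 < δ p.1 p.2 then (1 - μ p.1 p.2) / δ p.1 p.2
      else μ p.1 p.2 / (-δ p.1 p.2))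
    (fun j => if 0 < cδ j then ((c j : ℝ) - s j) / cδ j else (s j - (m j : ℝ)) / (-cδ j))
    with hth
  have hAne : A.Nonempty := by
    obtain ⟨i, hi⟩ := Function.ne_iff.mp hδ0
    obtain ⟨j, hj⟩ := Function.ne_iff.mp hi
    exact ⟨Sum.inl (i, j), (memA_inl (i, j)).mpr hj⟩
  set ε := A.inf' hAne th with hε
  have hεle : ∀ k ∈ A, ε ≤ th k := fun k hk => Finset.inf'_le th hk
  have hεpos : 0 < ε := by
    rw [hε, Finset.lt_inf'_iff]
    rintro (p | j) hk
    · rw [memA_inl] at hk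
      obtain ⟨h0, h1⟩ := hopen p hk
      simp only [hth, Sum.elim_inl]
      rcases lt_or_gt_of_ne hk with hneg | hpos
      · rw [if_neg (by linarith)]
        exact div_pos h0 (by linarith)
      · rw [if_pos hpos]
        exact div_pos (by linarith) hpos
    · rw [memA_inr] at hk
      obtain ⟨h0, h1⟩ := hopenj j hk
      simp only [hth, Sum.elim_inr]
      rcases lt_or_gt_of_ne hk with hneg | hpos
      · rw [if_neg (by linarith)]
        exact div_pos (by linarith) (by linarith)
      · rw [if_pos hpos]
        exact div_pos (by linarith) hpos
  have hentry : ∀ i j, 0 ≤ μ i j + ε * δ i j ∧ μ i j + ε * δ i j ≤ 1 := by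
    intro i j
    by_cases hδij : δ i j = 0
    · rw [hδij]; simpa using hb i j
    · have hkA : Sum.inl (i, j) ∈ A := (memA_inl (i, j)).mpr hδij
      have hle := hεle _ hkA
      obtain ⟨h0, h1⟩ := hopen (i, j) hδij
      simp only [hth, Sum.elim_inl] at hle
      rcases lt_or_gt_of_ne hδij with hneg | hpos
      · rw [if_neg (by linarith)] at hle
        have : ε * (-δ i j) ≤ μ i j := by
          rw [← le_div_iff₀ (by linarith : (0:ℝ) < -δ i j)]
          exact hle
        constructor
        · nlinarith
        · nlinarith [(hb i j).2]
      · rw [if_pos hpos] at hle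
        have : ε * δ i j ≤ 1 - μ i j := by
          rw [← le_div_iff₀ hpos]
          exact hle
        constructor
        · nlinarith [(hb i j).1]
        · linarith
  have hrow' : ∀ i, ∑ j, (μ i j + ε * δ i j) = d := by
    intro i
    rw [Finset.sum_add_distrib, ← Finset.mul_sum, hrowδ i, hrow i, mul_zero, add_zero]
  have hcolsum : ∀ j, ∑ i, (μ i j + ε * δ i j) = s j + ε * cδ j := by
    intro j
    rw [Finset.sum_add_distrib, ← Finset.mul_sum]
  have hcol' : ∀ j, (m j : ℝ) ≤ ∑ i, (μ i j + ε * δ i j) ∧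
      ∑ i, (μ i j + ε * δ i j) ≤ c j := by
    intro j
    rw [hcolsum j]
    by_cases hcj : cδ j = 0
    · rw [hcj, mul_zero, add_zero]; exact hcolb j
    · have hkA : Sum.inr j ∈ A := (memA_inr j).mpr hcj
      have hle := hεle _ hkA
      obtain ⟨h0, h1⟩ := hopenj j hcj
      simp only [hth, Sum.elim_inr] at hle
      rcases lt_or_gt_of_ne hcj with hneg | hpos
      · rw [if_neg (by linarith)] at hle
        have : ε * (-cδ j) ≤ s j - m j := by
          rw [← le_div_iff₀ (by linarith : (0:ℝ) < -cδ j)]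
          exact hle
        constructor
        · nlinarith
        · nlinarith
      · rw [if_pos hpos] at hle
        have : ε * cδ j ≤ (c j : ℝ) - s j := by
          rw [← le_div_iff₀ hpos]
          exact hle
        constructor
        · nlinarith
        · linarith
  refine ⟨ε, hεpos, hentry, hrow', hcol', ?_⟩
  have hsub : Bad (fun i j => μ i j + ε * δ i j) ⊆ Bad μ := by
    rintro (p | j) hk
    · rw [inl_mem_Bad] at hk ⊢
      by_cases hδp : δ p.1 p.2 = 0
      · simpa [hδp] using hk
      · exact hfracp p hδp
    · rw [inr_mem_Bad] at hk ⊢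
      by_cases hcj : cδ j = 0
      · have : ∑ i, (μ i j + ε * δ i j) = s j := by rw [hcolsum j, hcj, mul_zero, add_zero]
        simp only [this] at hk
        exact hk
      · exact hfracj j hcj
  obtain ⟨k, hkA, hkmin⟩ := Finset.exists_mem_eq_inf' hAne th
  rw [← hε] at hkmin
  refine Finset.ssubset_iff_of_subset hsub |>.mpr ?_
  rcases k with p | j
  · rw [memA_inl] at hkA
    refine ⟨Sum.inl p, inl_mem_Bad.mpr (hfracp p hkA), ?_⟩
    rw [inl_mem_Bad]
    simp only [hth, Sum.elim_inl] at hkmin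
    rcases lt_or_gt_of_ne hkA with hneg | hpos
    · rw [if_neg (by linarith)] at hkmin
      have : μ p.1 p.2 + ε * δ p.1 p.2 = 0 := by
        rw [hkmin, div_neg, neg_mul, div_mul_cancel₀ _ hkA]; ring
      simp [this]
    · rw [if_pos hpos] at hkmin
      have : μ p.1 p.2 + ε * δ p.1 p.2 = 1 := by
        rw [hkmin]; field_simp; ring
      simp [this]
  · rw [memA_inr] at hkA
    refine ⟨Sum.inr j, inr_mem_Bad.mpr (hfracj j hkA), ?_⟩
    rw [inr_mem_Bad, not_not]
    simp only [hth, Sum.elim_inr] at hkmin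
    rcases lt_or_gt_of_ne hkA with hneg | hpos
    · rw [if_neg (by linarith)] at hkmin
      have : ∑ i, (μ i j + ε * δ i j) = (m j : ℝ) := by
        rw [hcolsum j, hkmin, div_neg, neg_mul, div_mul_cancel₀ _ hkA]; ring
      rw [this]; exact isIntR_natCast _
    · rw [if_pos hpos] at hkmin
      have : ∑ i, (μ i j + ε * δ i j) = (c j : ℝ) := by
        rw [hcolsum j, hkmin]; field_simp; ring
      rw [this]; exact isIntR_natCast _

omit [DecidableEq N] [DecidableEq O] in
include hb in
lemma mem_D_of_no_frac {d : ℕ} {m c : O → ℕ}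
    (hrow : ∀ i, ∑ j, μ i j = d)
    (hcol : ∀ j, (m j : ℝ) ≤ ∑ i, μ i j ∧ ∑ i, μ i j ≤ c j)
    (hfrac : ¬ (fracSet μ).Nonempty) :
    (∀ i j, μ i j = 0 ∨ μ i j = 1) ∧ (∀ i, ∑ j, μ i j = d) ∧
      (∀ j, (m j : ℝ) ≤ ∑ i, μ i j ∧ ∑ i, μ i j ≤ c j) := by
  refine ⟨fun i j => ?_, hrow, hcol⟩
  by_contra hcon
  push_neg at hcon
  exact hfrac ⟨(i, j), mem_fracSet.mpr hcon⟩

omit [DecidableEq N] [DecidableEq O] in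
omit hb in
lemma mem_convexHull_of_memR {d : ℕ} {m c : O → ℕ} (D : Set (N → O → ℝ))
    (hD : D = {M : N → O → ℝ | (∀ i j, M i j = 0 ∨ M i j = 1) ∧
      (∀ i, ∑ j, M i j = d) ∧
      (∀ j, (m j : ℝ) ≤ ∑ i, M i j ∧ ∑ i, M i j ≤ c j)}) :
    ∀ n : ℕ, ∀ μ : N → O → ℝ, (Bad μ).card ≤ n →
      (∀ i j, 0 ≤ μ i j ∧ μ i j ≤ 1) → (∀ i, ∑ j, μ i j = d) →
      (∀ j, (m j : ℝ) ≤ ∑ i, μ i j ∧ ∑ i, μ i j ≤ c j) →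
      μ ∈ convexHull ℝ D := by
  classical
  intro n
  induction n with
  | zero =>
      intro μ hcard hb hrow hcol
      have hfrac : ¬ (fracSet μ).Nonempty := by
        rintro ⟨p, hp⟩
        have : Sum.inl p ∈ Bad μ := inl_mem_Bad.mpr (mem_fracSet.mp hp)
        have : 0 < (Bad μ).card := Finset.card_pos.mpr ⟨_, this⟩
        omega
      exact subset_convexHull ℝ D (by rw [hD]; exact mem_D_of_no_frac hb hrow hcol hfrac)
  | succ n ih =>
      intro μ hcard hb hrow hcol
      by_cases hfrac : (fracSet μ).Nonempty
      · obtain ⟨δ, hδ0, hsupp, hrowδ, hcolδ⟩ := exists_direction hb hrow hfrac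
        obtain ⟨ε₁, hε₁pos, hb₁, hrow₁, hcol₁, hBad₁⟩ :=
          perturb hb hrow hcol hδ0 hsupp hrowδ hcolδ
        have hδ0' : (fun i j => -δ i j) ≠ 0 := by
          intro h
          apply hδ0
          funext i j
          have := congrFun (congrFun h i) j
          simpa using this
        have hsupp' : ∀ p : N × O, p ∉ fracSet μ → (fun i j => -δ i j) p.1 p.2 = 0 := by
          intro p hp
          simp [hsupp p hp]
        have hrowδ' : ∀ i, ∑ j, (fun i j => -δ i j) i j = 0 := by
          intro i
          simp only [Finset.sum_neg_distrib, hrowδ i, neg_zero]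
        have hcolδ' : ∀ j, IsIntR (∑ i, μ i j) → ∑ i, (fun i j => -δ i j) i j = 0 := by
          intro j hj
          simp only [Finset.sum_neg_distrib, hcolδ j hj, neg_zero]
        obtain ⟨ε₂, hε₂pos, hb₂, hrow₂, hcol₂, hBad₂⟩ :=
          perturb hb hrow hcol hδ0' hsupp' hrowδ' hcolδ'
        have hμ₁ : (fun i j => μ i j + ε₁ * δ i j) ∈ convexHull ℝ D := by
          refine ih _ ?_ hb₁ hrow₁ hcol₁
          have := Finset.card_lt_card hBad₁
          omega
        have hμ₂ : (fun i j => μ i j + ε₂ * -δ i j) ∈ convexHull ℝ D := by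
          refine ih _ ?_ hb₂ hrow₂ hcol₂
          have := Finset.card_lt_card hBad₂
          omega
        have hsumpos : 0 < ε₁ + ε₂ := by linarith
        set a := ε₂ / (ε₁ + ε₂) with ha_def
        set b := ε₁ / (ε₁ + ε₂) with hb_def
        have ha : 0 ≤ a := div_nonneg hε₂pos.le hsumpos.le
        have hb' : 0 ≤ b := div_nonneg hε₁pos.le hsumpos.le
        have hab : a + b = 1 := by
          rw [ha_def, hb_def]
          field_simp
          ring
        have hcomb : a • (fun i j => μ i j + ε₁ * δ i j) +
            b • (fun i j => μ i j + ε₂ * -δ i j) = μ := by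
          funext i j
          simp only [Pi.add_apply, Pi.smul_apply, smul_eq_mul, ha_def, hb_def]
          field_simp
          ring
        have := (convex_convexHull ℝ D) hμ₁ hμ₂ ha hb' hab
        rwa [hcomb] at this
      · exact subset_convexHull ℝ D (by rw [hD]; exact mem_D_of_no_frac hb hrow hcol hfrac)

end Main

end CHA

/-- The convex hull of the set of allowable deterministic
allocations equals the polytope `R` given by demand equalities and
minimum/capacity constraints on the column marginals. -/
theorem convexHull_allowable_eq_R
    {N O : Type*} [Fintype N] [Fintype O] [Nonempty N] [Nonempty O]
    (d : ℕ) (hd : 1 ≤ d) (m c : O → ℕ)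
    (hc1 : ∀ j, 1 ≤ c j) (hc2 : ∀ j, c j ≤ Fintype.card N)
    (D : Set (N → O → ℝ))
    (hD : D = {M : N → O → ℝ | (∀ i j, M i j = 0 ∨ M i j = 1) ∧
      (∀ i, ∑ j, M i j = d) ∧
      (∀ j, (m j : ℝ) ≤ ∑ i, M i j ∧ ∑ i, M i j ≤ c j)}) :
    convexHull ℝ D =
      {μ : N → O → ℝ | (∀ i j, 0 ≤ μ i j ∧ μ i j ≤ 1) ∧
        (∀ i, ∑ j, μ i j = d) ∧
        (∀ j, (m j : ℝ) ≤ ∑ i, μ i j ∧ ∑ i, μ i j ≤ c j)} := by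
  classical
  apply Set.Subset.antisymm
  · refine convexHull_min ?_ ?_
    · rw [hD]
      rintro M ⟨hM01, hMrow, hMcol⟩
      refine ⟨fun i j => ?_, hMrow, hMcol⟩
      rcases hM01 i j with h | h <;> simp [h]
    · rintro x ⟨hx1, hx2, hx3⟩ y ⟨hy1, hy2, hy3⟩ a b ha hb hab
      refine ⟨fun i j => ?_, fun i => ?_, fun j => ?_⟩
      · simp only [Pi.add_apply, Pi.smul_apply, smul_eq_mul]
        constructor
        · have := (hx1 i j).1; have := (hy1 i j).1
          nlinarith
        · have := (hx1 i j).2; have := (hy1 i j).2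
          nlinarith
      · simp only [Pi.add_apply, Pi.smul_apply, smul_eq_mul]
        rw [Finset.sum_add_distrib, ← Finset.mul_sum, ← Finset.mul_sum, hx2 i, hy2 i]
        linear_combination (d : ℝ) * hab
      · simp only [Pi.add_apply, Pi.smul_apply, smul_eq_mul]
        rw [Finset.sum_add_distrib, ← Finset.mul_sum, ← Finset.mul_sum]
        constructor
        · have h1 := (hx3 j).1; have h2 := (hy3 j).1
          nlinarith [mul_le_mul_of_nonneg_left h1 ha, mul_le_mul_of_nonneg_left h2 hb]
        · have h1 := (hx3 j).2; have h2 := (hy3 j).2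
          nlinarith [mul_le_mul_of_nonneg_left h1 ha, mul_le_mul_of_nonneg_left h2 hb]
  · rintro μ ⟨hb, hrow, hcol⟩
    exact CHA.mem_convexHull_of_memR D hD (CHA.Bad μ).card μ le_rfl hb hrow hcol
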